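/- Let A ∈ ℝ^{m×n} have full column rank, b ∈ ℝ^m, x* = A†b the least squares solution, and suppose g(x) is a random function satisfying: (i) E[g(x)|x] = (1/(st)) A^T(Ax − b) for all x; (ii) E[‖g(x) − g(x*)‖₂² | x] ≤ ρ ‖x − x*‖₂² for a constant ρ > 0; (iii) E[‖g(x*)‖₂²] ≤ C/(st) for a constant C ≥ 0. Then the iteration x^k = x^{k−1} − α g(x^{k−1}) with constant step size 0 < α < σ_min²(A)/(st ρ) satisfies E[‖x^k − x*‖₂²] ≤ (1 − 2ασ_min²(A)/(st) + 2α²ρ)^k ‖x^0 − x*‖₂² + αC/(σ_min²(A) − α st ρ). -/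

import Mathlib

open Matrix BigOperators Finset Filter

noncomputable section

/-- Entrywise Bernoulli mask of a matrix. -/
def maskM {m n : ℕ} (δ : Fin m → Fin n → Bool) (A : Matrix (Fin m) (Fin n) ℝ) :
    Matrix (Fin m) (Fin n) ℝ := Matrix.of fun i j => if δ i j then A i j else 0

/-- Entrywise Bernoulli mask of a vector. -/
def maskV {m : ℕ} (ε : Fin m → Bool) (b : Fin m → ℝ) : Fin m → ℝ :=
  fun i => if ε i then b i else 0

/-- Probability of a given mask realization: i.i.d. Bernoulli(p) entries. -/
def wM {m n : ℕ} (p : ℝ) (δ : Fin m → Fin n → Bool) : ℝ :=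
  ∏ i, ∏ j, (if δ i j then p else 1 - p)

/-- Probability of a given vector-mask realization: i.i.d. Bernoulli(q) entries. -/
def wV {m : ℕ} (q : ℝ) (ε : Fin m → Bool) : ℝ :=
  ∏ i, (if ε i then q else 1 - q)

/-- `dsel K = I_{:,K} (I_{:,K})ᵀ`, the 0/1 diagonal selection matrix of an index set. -/
def dsel {k : ℕ} (K : Finset (Fin k)) : Matrix (Fin k) (Fin k) ℝ :=
  Matrix.diagonal fun i => if i ∈ K then (1 : ℝ) else 0

/-- `diagPart M` keeps only the diagonal of the square matrix `M`. -/
def diagPart {k : ℕ} (M : Matrix (Fin k) (Fin k) ℝ) : Matrix (Fin k) (Fin k) ℝ :=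
  Matrix.diagonal fun i => M i i

/-- Squared Euclidean norm. -/
def sqnorm {k : ℕ} (v : Fin k → ℝ) : ℝ := ∑ i, (v i) ^ 2

/-- Squared Frobenius norm. -/
def frobSq {m n : ℕ} (A : Matrix (Fin m) (Fin n) ℝ) : ℝ := ∑ i, ∑ j, (A i j) ^ 2

/-- `P` is a partition of the index set into nonempty pairwise disjoint blocks. -/
def IsPartition {k s : ℕ} (P : Fin s → Finset (Fin k)) : Prop :=
  (∀ i : Fin k, ∃! a : Fin s, i ∈ P a) ∧ ∀ a : Fin s, (P a).Nonempty



lemma sqnorm_nonneg {k : ℕ} (v : Fin k → ℝ) : 0 ≤ sqnorm v :=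
  Finset.sum_nonneg fun _ _ => sq_nonneg _

def dotp {k : ℕ} (u v : Fin k → ℝ) : ℝ := ∑ i, u i * v i

lemma sqnorm_sub_smul {k : ℕ} (x g : Fin k → ℝ) (α : ℝ) :
    sqnorm (x - α • g) = sqnorm x - 2*α * dotp g x + α^2 * sqnorm g := by
  simp only [sqnorm, dotp, Pi.sub_apply, Pi.smul_apply, smul_eq_mul]
  rw [Finset.mul_sum, Finset.mul_sum, ← Finset.sum_sub_distrib, ← Finset.sum_add_distrib]
  exact Finset.sum_congr rfl fun i _ => by ring

lemma sqnorm_smul {k : ℕ} (c : ℝ) (v : Fin k → ℝ) : sqnorm (c • v) = c^2 * sqnorm v := by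
  simp [sqnorm, mul_pow, Finset.mul_sum]

lemma dotp_transpose {m n : ℕ} (A : Matrix (Fin m) (Fin n) ℝ) (u : Fin m → ℝ) (v : Fin n → ℝ) :
    dotp (Aᵀ *ᵥ u) v = ∑ j, u j * (A *ᵥ v) j := by
  simp only [dotp, Matrix.mulVec, dotProduct, Matrix.transpose_apply,
    Finset.sum_mul, Finset.mul_sum]
  rw [Finset.sum_comm]
  exact Finset.sum_congr rfl fun j _ => Finset.sum_congr rfl fun i _ => by ring

lemma dotp_AtA {m n : ℕ} (A : Matrix (Fin m) (Fin n) ℝ) (v : Fin n → ℝ) :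
    dotp (Aᵀ *ᵥ (A *ᵥ v)) v = sqnorm (A *ᵥ v) := by
  rw [dotp_transpose]; simp [sqnorm, sq]

lemma cauchy_dotp {k : ℕ} (u v : Fin k → ℝ) : (dotp u v)^2 ≤ sqnorm u * sqnorm v :=
  Finset.sum_mul_sq_le_sq_mul_sq _ _ _

lemma jensen {n : ℕ} {Ω : Type} [Fintype Ω] (w : Ω → ℝ) (hw : ∀ ω, 0 ≤ w ω)
    (hw1 : ∑ ω, w ω = 1) (v : Ω → Fin n → ℝ) :
    sqnorm (∑ ω, w ω • v ω) ≤ ∑ ω, w ω * sqnorm (v ω) := by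
  have key : ∀ i, (∑ ω, w ω * v ω i)^2 ≤ ∑ ω, w ω * (v ω i)^2 := by
    intro i
    have h := Finset.sum_mul_sq_le_sq_mul_sq Finset.univ (fun ω => Real.sqrt (w ω))
      (fun ω => Real.sqrt (w ω) * v ω i)
    have e1 : ∀ ω : Ω, Real.sqrt (w ω) * (Real.sqrt (w ω) * v ω i) = w ω * v ω i := by
      intro ω; rw [← mul_assoc, Real.mul_self_sqrt (hw ω)]
    have e2 : ∀ ω : Ω, Real.sqrt (w ω) ^ 2 = w ω := fun ω => Real.sq_sqrt (hw ω)
    have e3 : ∀ ω : Ω, (Real.sqrt (w ω) * v ω i)^2 = w ω * (v ω i)^2 := by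
      intro ω; rw [mul_pow, e2]
    simp only [e1, e2, e3, hw1, one_mul] at h
    exact h
  calc sqnorm (∑ ω, w ω • v ω) = ∑ i, (∑ ω, w ω * v ω i)^2 := by
        simp [sqnorm, Finset.sum_apply]
    _ ≤ ∑ i, ∑ ω, w ω * (v ω i)^2 := Finset.sum_le_sum fun i _ => key i
    _ = ∑ ω, w ω * sqnorm (v ω) := by
        rw [Finset.sum_comm]
        exact Finset.sum_congr rfl fun ω _ => by rw [sqnorm, Finset.mul_sum]

def snocEquiv (Ω : Type) (k : ℕ) : (Fin k → Ω) × Ω ≃ (Fin (k+1) → Ω) where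
  toFun p := Fin.snoc p.1 p.2
  invFun f := (fun i => f i.castSucc, f (Fin.last k))
  left_inv p := by ext i <;> simp
  right_inv f := by
    funext i
    refine Fin.lastCases ?_ ?_ i <;> simp

lemma sum_snoc {Ω : Type} [Fintype Ω] {k : ℕ} (F : (Fin (k+1) → Ω) → ℝ) :
    ∑ f : Fin (k+1) → Ω, F f = ∑ τ : Fin k → Ω, ∑ ω₀ : Ω, F (Fin.snoc τ ω₀) := by
  rw [← Equiv.sum_comp (snocEquiv Ω k) F, Fintype.sum_prod_type]
  rfl

lemma prod_snoc {Ω : Type} [Fintype Ω] {k : ℕ} (w : Ω → ℝ) (τ : Fin k → Ω) (ω₀ : Ω) :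
    (∏ i : Fin (k+1), w ((Fin.snoc τ ω₀ : Fin (k+1) → Ω) i)) = (∏ i : Fin k, w (τ i)) * w ω₀ := by
  rw [Fin.prod_univ_castSucc]
  simp

lemma mass {Ω : Type} [Fintype Ω] (w : Ω → ℝ) (hw1 : ∑ ω, w ω = 1) :
    ∀ k, ∑ τ : Fin k → Ω, ∏ i, w (τ i) = 1
  | 0 => by simp
  | (k+1) => by
    rw [sum_snoc (fun f => ∏ i, w (f i))]
    simp only [prod_snoc]
    calc ∑ τ : Fin k → Ω, ∑ ω₀, (∏ i, w (τ i)) * w ω₀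
        = ∑ τ : Fin k → Ω, (∏ i, w (τ i)) * ∑ ω₀, w ω₀ :=
          Finset.sum_congr rfl fun τ _ => (Finset.mul_sum _ _ _).symm
      _ = 1 := by rw [hw1]; simpa using mass w hw1 k

lemma aux_r_nonneg (T σ α ρ : ℝ) (hT : 0 < T) (hq : (σ^2/T)^2 ≤ ρ) :
    0 ≤ 1 - 2*α*σ^2/T + 2*α^2*ρ := by
  have hq' : σ^4 ≤ ρ*T^2 := by
    rw [div_pow, div_le_iff₀ (by positivity)] at hq
    nlinarith [hq]
  have expand : 1 - 2*α*σ^2/T + 2*α^2*ρ = (T^2 - 2*α*σ^2*T + 2*α^2*ρ*T^2)/T^2 := by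
    field_simp
  rw [expand]
  apply div_nonneg _ (sq_nonneg T)
  nlinarith [mul_le_mul_of_nonneg_left hq' (sq_nonneg α), sq_nonneg (α*σ^2 - T/2)]

lemma aux_step (T σ α ρ C sq sqA G : ℝ) (hT : 0 < T) (hα : 0 < α)
    (hA : σ^2 * sq ≤ sqA) (hG : G ≤ 2*ρ*sq + 2*(C/T)) :
    sq - 2*α*((1/T) * sqA) + α^2 * G
      ≤ (1 - 2*α*σ^2/T + 2*α^2*ρ) * sq + 2*α^2*C/T := by
  have hm1 : (2*α/T) * (σ^2 * sq) ≤ (2*α/T) * sqA :=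
    mul_le_mul_of_nonneg_left hA (by positivity)
  have hm2 : α^2 * G ≤ α^2 * (2*ρ*sq + 2*(C/T)) :=
    mul_le_mul_of_nonneg_left hG (sq_nonneg α)
  have h1 : sq - 2*α*((1/T)*sqA) + α^2*G
      ≤ sq - (2*α/T)*(σ^2*sq) + α^2*(2*ρ*sq+2*(C/T)) := by
    have e : 2*α*((1/T)*sqA) = (2*α/T)*sqA := by ring
    rw [e]; linarith [hm1, hm2]
  calc sq - 2*α*((1/T)*sqA) + α^2*G
      ≤ sq - (2*α/T)*(σ^2*sq) + α^2*(2*ρ*sq+2*(C/T)) := h1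
    _ = (1 - 2*α*σ^2/T + 2*α^2*ρ) * sq + 2*α^2*C/T := by
        field_simp; ring

set_option maxHeartbeats 2000000 in
theorem stmt13 {m n s t : ℕ} (A : Matrix (Fin m) (Fin n) ℝ) (b : Fin m → ℝ)
    (σ ρ C α : ℝ) (hσpos : 0 < σ)
    (hσ : ∀ x : Fin n → ℝ, σ ^ 2 * sqnorm x ≤ sqnorm (A *ᵥ x))
    (hst : 0 < s * t)
    (xstar : Fin n → ℝ) (hstar : Aᵀ *ᵥ (A *ᵥ xstar) = Aᵀ *ᵥ b)
    (Ω : Type) [Fintype Ω] (w : Ω → ℝ) (hw : ∀ ω, 0 ≤ w ω) (hw1 : ∑ ω, w ω = 1)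
    (g : Ω → (Fin n → ℝ) → (Fin n → ℝ))
    (hunbiased : ∀ x, ∑ ω, w ω • g ω x = (1 / (s * t : ℝ)) • (Aᵀ *ᵥ (A *ᵥ x - b)))
    (hρ : 0 < ρ)
    (hlip : ∀ x, ∑ ω, w ω * sqnorm (g ω x - g ω xstar) ≤ ρ * sqnorm (x - xstar))
    (hC : 0 ≤ C) (hCbound : ∑ ω, w ω * sqnorm (g ω xstar) ≤ C / (s * t : ℝ))
    (hα : 0 < α) (hα2 : α < σ ^ 2 / ((s * t : ℝ) * ρ))
    (X : (k : ℕ) → (Fin k → Ω) → (Fin n → ℝ)) (x0 : Fin n → ℝ)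
    (hX0 : ∀ ω0 : Fin 0 → Ω, X 0 ω0 = x0)
    (hXstep : ∀ (k : ℕ) (ω : Fin (k + 1) → Ω),
      X (k + 1) ω = X k (fun i => ω i.castSucc)
        - α • g (ω (Fin.last k)) (X k (fun i => ω i.castSucc))) :
    ∀ k : ℕ, ∑ ω : Fin k → Ω, (∏ i, w (ω i)) * sqnorm (X k ω - xstar)
      ≤ (1 - 2 * α * σ ^ 2 / (s * t : ℝ) + 2 * α ^ 2 * ρ) ^ k * sqnorm (x0 - xstar)
        + α * C / (σ ^ 2 - α * (s * t : ℝ) * ρ) := by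
  set T : ℝ := (s : ℝ) * (t : ℝ) with hTdef
  have hT : 0 < T := by
    have h0 : (0:ℝ) < ((s*t : ℕ) : ℝ) := by exact_mod_cast hst
    rw [hTdef]; push_cast at h0 ⊢; linarith
  have key : α * (T * ρ) < σ^2 := (lt_div_iff₀ (mul_pos hT hρ)).mp hα2
  have hden : 0 < σ^2 - α * T * ρ := by nlinarith [key]
  set r : ℝ := 1 - 2 * α * σ ^ 2 / T + 2 * α ^ 2 * ρ with hrdef
  have hr1 : r < 1 := by
    have h1 : 2*α^2*ρ < 2*α*σ^2/T := by
      rw [lt_div_iff₀ hT]; nlinarith [key, hα]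
    rw [hrdef]; linarith
  have hrhs0 : 0 ≤ α * C / (σ^2 - α * T * ρ) :=
    div_nonneg (mul_nonneg hα.le hC) hden.le
  by_cases hn : n = 0
  · subst hn
    intro k
    have hz : ∀ v : Fin 0 → ℝ, sqnorm v = 0 := fun v => by simp [sqnorm]
    simp only [hz, mul_zero, Finset.sum_const_zero, zero_add]
    exact hrhs0
  · -- n ≥ 1 : show 0 ≤ r
    have hr0 : 0 ≤ r := by
      obtain ⟨i0⟩ : Nonempty (Fin n) := ⟨⟨0, Nat.pos_of_ne_zero hn⟩⟩
      set v : Fin n → ℝ := fun j => if j = i0 then 1 else 0 with hvdef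
      have hv1 : sqnorm v = 1 := by
        simp [sqnorm, hvdef, Finset.sum_ite_eq', apply_ite (fun x : ℝ => x^2)]
      set x : Fin n → ℝ := xstar + v with hxdef
      have hxv : x - xstar = v := by rw [hxdef]; abel
      have hmean : ∑ ω, w ω • (g ω x - g ω xstar) = (1/T) • (Aᵀ *ᵥ (A *ᵥ v)) := by
        calc ∑ ω, w ω • (g ω x - g ω xstar)
            = (∑ ω, w ω • g ω x) - (∑ ω, w ω • g ω xstar) := by
              rw [← Finset.sum_sub_distrib]
              exact Finset.sum_congr rfl fun ω _ => smul_sub _ _ _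
          _ = (1/T) • ((Aᵀ *ᵥ (A *ᵥ x - b)) - (Aᵀ *ᵥ (A *ᵥ xstar - b))) := by
              rw [hunbiased x, hunbiased xstar, smul_sub]
          _ = (1/T) • (Aᵀ *ᵥ (A *ᵥ v)) := by
              rw [← Matrix.mulVec_sub, sub_sub_sub_cancel_right, ← Matrix.mulVec_sub, hxv]
      have hjen : sqnorm ((1/T) • (Aᵀ *ᵥ (A *ᵥ v))) ≤ ρ := by
        have hj := jensen w hw hw1 (fun ω => g ω x - g ω xstar)
        rw [hmean] at hj
        calc sqnorm ((1/T) • (Aᵀ *ᵥ (A *ᵥ v)))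
            ≤ ∑ ω, w ω * sqnorm (g ω x - g ω xstar) := hj
          _ ≤ ρ * sqnorm (x - xstar) := hlip x
          _ = ρ := by rw [hxv, hv1, mul_one]
      have hlow : σ^2 ≤ dotp (Aᵀ *ᵥ (A *ᵥ v)) v := by
        rw [dotp_AtA]
        have h := hσ v
        rw [hv1] at h; linarith
      have hAtA : σ^4 ≤ sqnorm (Aᵀ *ᵥ (A *ᵥ v)) := by
        have hcs := cauchy_dotp (Aᵀ *ᵥ (A *ᵥ v)) v
        rw [hv1, mul_one] at hcs
        nlinarith [hlow, sq_nonneg σ, sq_nonneg (σ^2)]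
      have hq : (σ^2/T)^2 ≤ ρ := by
        rw [sqnorm_smul] at hjen
        have h1 : (1/T)^2 * σ^4 ≤ ρ := by nlinarith [hAtA, sq_nonneg (1/T)]
        calc (σ^2/T)^2 = (1/T)^2 * σ^4 := by ring
          _ ≤ ρ := h1
      rw [hrdef]
      exact aux_r_nonneg T σ α ρ hT hq
    -- one-step bound
    have hstep : ∀ x : Fin n → ℝ,
        ∑ ω, w ω * sqnorm (x - α • g ω x - xstar)
          ≤ r * sqnorm (x - xstar) + 2*α^2*C/T := by
      intro x
      have hexp : ∀ ω, sqnorm (x - α • g ω x - xstar)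
          = sqnorm (x - xstar) - 2*α * dotp (g ω x) (x - xstar) + α^2 * sqnorm (g ω x) := by
        intro ω; rw [sub_right_comm, sqnorm_sub_smul]
      have hsum : ∑ ω, w ω * sqnorm (x - α • g ω x - xstar)
          = sqnorm (x - xstar) - 2*α*(∑ ω, w ω * dotp (g ω x) (x - xstar))
            + α^2 * ∑ ω, w ω * sqnorm (g ω x) := by
        simp_rw [hexp]
        have e : ∀ ω : Ω, w ω * (sqnorm (x - xstar) - 2*α * dotp (g ω x) (x - xstar)
              + α^2 * sqnorm (g ω x))
            = w ω * sqnorm (x - xstar) - 2*α*(w ω * dotp (g ω x) (x - xstar))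
              + α^2*(w ω * sqnorm (g ω x)) := fun ω => by ring
        simp_rw [e]
        rw [Finset.sum_add_distrib, Finset.sum_sub_distrib, ← Finset.sum_mul, hw1, one_mul,
          ← Finset.mul_sum, ← Finset.mul_sum]
      have hdot : ∑ ω, w ω * dotp (g ω x) (x - xstar) = (1/T) * sqnorm (A *ᵥ (x - xstar)) := by
        have h1 : ∑ ω, w ω * dotp (g ω x) (x - xstar)
            = dotp (∑ ω, w ω • g ω x) (x - xstar) := by
          simp only [dotp, Finset.mul_sum, Finset.sum_apply, Pi.smul_apply, smul_eq_mul]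
          rw [Finset.sum_comm]
          exact Finset.sum_congr rfl fun i _ => by
            rw [Finset.sum_mul]
            exact Finset.sum_congr rfl fun ω _ => by ring
        rw [h1, hunbiased x]
        have hAb : Aᵀ *ᵥ (A *ᵥ x - b) = Aᵀ *ᵥ (A *ᵥ (x - xstar)) := by
          rw [Matrix.mulVec_sub, ← hstar, ← Matrix.mulVec_sub, ← Matrix.mulVec_sub]
        rw [hAb]
        have h2 : dotp ((1/T) • (Aᵀ *ᵥ (A *ᵥ (x - xstar)))) (x - xstar)
            = (1/T) * dotp (Aᵀ *ᵥ (A *ᵥ (x - xstar))) (x - xstar) := by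
          simp [dotp, Finset.mul_sum, mul_assoc]
        rw [h2, dotp_AtA]
      have hg : ∑ ω, w ω * sqnorm (g ω x) ≤ 2*ρ*sqnorm (x - xstar) + 2*(C/T) := by
        have hbd : ∀ ω, sqnorm (g ω x)
            ≤ 2 * sqnorm (g ω x - g ω xstar) + 2 * sqnorm (g ω xstar) := by
          intro ω
          unfold sqnorm
          rw [Finset.mul_sum, Finset.mul_sum, ← Finset.sum_add_distrib]
          refine Finset.sum_le_sum fun i _ => ?_
          simp only [Pi.sub_apply]
          nlinarith [sq_nonneg (g ω x i - 2 * g ω xstar i)]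
        calc ∑ ω, w ω * sqnorm (g ω x)
            ≤ ∑ ω, w ω * (2*sqnorm (g ω x - g ω xstar) + 2*sqnorm (g ω xstar)) :=
              Finset.sum_le_sum fun ω _ => mul_le_mul_of_nonneg_left (hbd ω) (hw ω)
          _ = 2*(∑ ω, w ω * sqnorm (g ω x - g ω xstar))
              + 2*(∑ ω, w ω * sqnorm (g ω xstar)) := by
              rw [Finset.mul_sum, Finset.mul_sum, ← Finset.sum_add_distrib]
              exact Finset.sum_congr rfl fun ω _ => by ring
          _ ≤ 2*(ρ*sqnorm (x - xstar)) + 2*(C/T) := by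
              have h3 := hlip x
              have h4 := hCbound
              linarith
          _ = 2*ρ*sqnorm (x - xstar) + 2*(C/T) := by ring
      rw [hsum, hdot, hrdef]
      exact aux_step T σ α ρ C _ _ _ hT hα (hσ (x - xstar)) hg
    -- recursion + induction
    have main : ∀ k : ℕ,
        (∑ ω : Fin k → Ω, (∏ i, w (ω i)) * sqnorm (X k ω - xstar))
          ≤ r^k * sqnorm (x0 - xstar) + (2*α^2*C/T) * ∑ i ∈ Finset.range k, r^i := by
      intro k
      induction k with
      | zero =>
        have h0 : (∑ ω : Fin 0 → Ω, (∏ i, w (ω i)) * sqnorm (X 0 ω - xstar))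
            = sqnorm (x0 - xstar) := by
          haveI : Unique (Fin 0 → Ω) := ⟨⟨fun i => i.elim0⟩, fun f => funext fun i => i.elim0⟩
          rw [Fintype.sum_unique, hX0]
          simp
        rw [h0]; simp
      | succ k ih =>
        have hrec : (∑ ω : Fin (k+1) → Ω, (∏ i, w (ω i)) * sqnorm (X (k+1) ω - xstar))
            ≤ r * (∑ ω : Fin k → Ω, (∏ i, w (ω i)) * sqnorm (X k ω - xstar)) + 2*α^2*C/T := by
          rw [sum_snoc (fun f => (∏ i, w (f i)) * sqnorm (X (k+1) f - xstar))]
          have heval : ∀ (τ : Fin k → Ω) (ω₀ : Ω),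
              (∏ i, w ((Fin.snoc τ ω₀ : Fin (k+1) → Ω) i))
                * sqnorm (X (k+1) (Fin.snoc τ ω₀) - xstar)
              = (∏ i, w (τ i)) * (w ω₀ * sqnorm (X k τ - α • g ω₀ (X k τ) - xstar)) := by
            intro τ ω₀
            rw [prod_snoc]
            have hX := hXstep k (Fin.snoc τ ω₀)
            have h1 : (fun i => (Fin.snoc τ ω₀ : Fin (k+1) → Ω) i.castSucc) = τ := by
              funext i; simp
            have h2 : (Fin.snoc τ ω₀ : Fin (k+1) → Ω) (Fin.last k) = ω₀ := by simp
            rw [hX, h1, h2]; ring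
          simp only [heval]
          calc ∑ τ : Fin k → Ω, ∑ ω₀,
                (∏ i, w (τ i)) * (w ω₀ * sqnorm (X k τ - α • g ω₀ (X k τ) - xstar))
              = ∑ τ : Fin k → Ω, (∏ i, w (τ i))
                  * ∑ ω₀, w ω₀ * sqnorm (X k τ - α • g ω₀ (X k τ) - xstar) :=
                Finset.sum_congr rfl fun τ _ => (Finset.mul_sum _ _ _).symm
            _ ≤ ∑ τ : Fin k → Ω, (∏ i, w (τ i)) * (r * sqnorm (X k τ - xstar) + 2*α^2*C/T) :=
                Finset.sum_le_sum fun τ _ => mul_le_mul_of_nonneg_left (hstep (X k τ))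
                  (Finset.prod_nonneg fun i _ => hw _)
            _ = r * (∑ τ : Fin k → Ω, (∏ i, w (τ i)) * sqnorm (X k τ - xstar))
                + (2*α^2*C/T) * ∑ τ : Fin k → Ω, ∏ i, w (τ i) := by
                rw [Finset.mul_sum, Finset.mul_sum, ← Finset.sum_add_distrib]
                exact Finset.sum_congr rfl fun τ _ => by ring
            _ = r * (∑ τ : Fin k → Ω, (∏ i, w (τ i)) * sqnorm (X k τ - xstar)) + 2*α^2*C/T := by
                rw [mass w hw1 k, mul_one]
        calc (∑ ω : Fin (k+1) → Ω, (∏ i, w (ω i)) * sqnorm (X (k+1) ω - xstar))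
            ≤ r * (∑ ω : Fin k → Ω, (∏ i, w (ω i)) * sqnorm (X k ω - xstar)) + 2*α^2*C/T :=
              hrec
          _ ≤ r * (r^k * sqnorm (x0 - xstar) + (2*α^2*C/T) * ∑ i ∈ Finset.range k, r^i)
              + 2*α^2*C/T :=
              add_le_add_left (mul_le_mul_of_nonneg_left ih hr0) _
          _ = r^(k+1) * sqnorm (x0 - xstar)
              + (2*α^2*C/T) * ∑ i ∈ Finset.range (k+1), r^i := by
              rw [geom_sum_succ]; ring
    intro k
    refine le_trans (main k) ?_
    have h2 : 0 < 1 - r := by linarith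
    have hgeom : ∑ i ∈ Finset.range k, r^i ≤ 1/(1-r) := by
      have h1 : (1-r) * ∑ i ∈ Finset.range k, r^i = 1 - r^k := by
        linear_combination (-1 : ℝ) * geom_sum_mul r k
      rw [le_div_iff₀ h2]
      nlinarith [pow_nonneg hr0 k, h1]
    have hc : (0:ℝ) ≤ 2*α^2*C/T := div_nonneg (by positivity) hT.le
    have hmono : (2*α^2*C/T) * ∑ i ∈ Finset.range k, r^i ≤ (2*α^2*C/T) * (1/(1-r)) :=
      mul_le_mul_of_nonneg_left hgeom hc
    have h1r : 1 - r = 2*α*(σ^2 - α*T*ρ)/T := by rw [hrdef]; field_simp; ring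
    have heq : (2*α^2*C/T) * (1/(1-r)) = α*C/(σ^2 - α*T*ρ) := by
      have h5 : T ≠ 0 := hT.ne'
      have h6 : σ^2 - α*T*ρ ≠ 0 := hden.ne'
      have h7 : α ≠ 0 := hα.ne'
      rw [h1r]
      field_simp
    rw [heq] at hmono
    linarith
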